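/- For b ≥ 2, the map n ↦ n ⊕_{-b} (-n) takes values in the set of non-negative integers all of whose base-b digits lie in {0,1}, and satisfies (n ⊕_{-b} (-n)) = 0 if and only if n = 0. -/

import Mathlib

/-- The `i`-th digit of the base-`b` expansion of `n`. -/
def bDigit (b n i : ℕ) : ℕ := (Nat.digits b n).getD i 0

/-- One step of the base-`(-b)` digit extraction: remove the least digit and divide by `-b`. -/
def negaStep (b m : ℤ) : ℤ := (m - m % b) / (-b)

/-- The `i`-th digit of the base-`(-b)` expansion of the integer `m`
(digits lie in `{0,...,b-1}` when `b ≥ 2`). -/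
def negaDigit (b m : ℤ) (i : ℕ) : ℤ := ((negaStep b)^[i] m) % b

/-- Digitwise addition mod `b` of base-`(-b)` expansions, read off in powers of `+b`. -/
noncomputable def oplusNeg (b α β : ℤ) : ℤ :=
  ∑ᶠ i : ℕ, ((negaDigit b α i + negaDigit b β i) % b) * b ^ i

/-- Digitwise addition mod `b` of base-`b` expansions. -/
noncomputable def oplus (b α β : ℕ) : ℕ :=
  ∑ᶠ i : ℕ, ((bDigit b α i + bDigit b β i) % b) * b ^ i

/-- Digitwise subtraction mod `b` of base-`b` expansions. -/
noncomputable def ominus (b α β : ℕ) : ℕ :=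
  ∑ᶠ i : ℕ, ((((bDigit b α i : ℤ) - (bDigit b β i : ℤ)) % (b : ℤ)).toNat) * b ^ i

/-- Flattening: replace each nonzero base-`b` digit by `1`. -/
noncomputable def flat (b n : ℕ) : ℕ :=
  ∑ᶠ i : ℕ, min (bDigit b n i) 1 * b ^ i

/-- The carry sequence for multiplying `n` by `b+1` in base `b`. -/
def carrySeq (b n : ℕ) : ℕ → ℕ
  | 0 => 0
  | k + 1 => (bDigit b n k + carrySeq b n k) / b + bDigit b n k

lemma negaStep_eq {b : ℕ} (hb : 2 ≤ b) (m : ℤ) : negaStep (b:ℤ) m = -(m / (b:ℤ)) := by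
  have hB : (b:ℤ) ≠ 0 := by positivity
  unfold negaStep
  have h : m - m % (b:ℤ) = (b:ℤ) * (m / (b:ℤ)) := by
    have := Int.mul_ediv_add_emod m (b:ℤ); linarith
  rw [h, Int.ediv_neg, Int.mul_ediv_cancel_left _ hB]

lemma negaStep_zero (b : ℤ) : negaStep b 0 = 0 := by simp [negaStep]

lemma ediv_neg_small {b : ℕ} (hb : 2 ≤ b) {x : ℤ} (h1 : -(b:ℤ) ≤ x) (h2 : x < 0) :
    x / (b:ℤ) = -1 := by
  have hB : (2:ℤ) ≤ (b:ℤ) := by exact_mod_cast hb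
  have h3 : (x + (b:ℤ) * 1) / (b:ℤ) = x / (b:ℤ) + 1 := Int.add_mul_ediv_left x 1 (by omega)
  have h4 : (x + (b:ℤ) * 1) / (b:ℤ) = 0 := Int.ediv_eq_zero_of_lt (by omega) (by omega)
  omega

lemma ediv_pos_small {b : ℕ} (hb : 2 ≤ b) {x : ℤ} (h1 : 0 ≤ x) (h2 : x < (b:ℤ)) :
    x / (b:ℤ) = 0 := Int.ediv_eq_zero_of_lt h1 h2

lemma natAbs_ediv_lt {b : ℕ} (hb : 2 ≤ b) {m : ℤ} (hm : 2 ≤ m.natAbs) :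
    (m / (b:ℤ)).natAbs < m.natAbs := by
  have hB : (2:ℤ) ≤ (b:ℤ) := by exact_mod_cast hb
  have H := Int.mul_ediv_add_emod m (b:ℤ)
  have hr0 : 0 ≤ m % (b:ℤ) := Int.emod_nonneg m (by omega)
  have hr1 : m % (b:ℤ) < b := Int.emod_lt_of_pos m (by omega)
  set q := m / (b:ℤ) with hqd
  rcases le_or_gt 0 m with h | h
  · have hm2 : 2 ≤ m := by omega
    have h1 : 0 ≤ q := Int.ediv_nonneg (by omega) (by omega)
    have h2 : q < m := by nlinarith
    omega
  · have hm2 : m ≤ -2 := by omega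
    have h2 : q < 0 := Int.ediv_neg_of_neg_of_pos h (by omega)
    have h1 : m < q := by
      rcases eq_or_lt_of_le (show q ≤ -1 by omega) with hq | hq
      · omega
      · have hq2 : q ≤ -2 := by omega
        nlinarith
    omega

lemma iter_zero {b : ℕ} (hb : 2 ≤ b) : ∀ k : ℕ, ∀ m : ℤ, m.natAbs ≤ k + 1 →
    (negaStep (b:ℤ))^[k + 2] m = 0 := by
  have hB : (2:ℤ) ≤ (b:ℤ) := by exact_mod_cast hb
  have hone : negaStep (b:ℤ) 1 = 0 := by
    rw [negaStep_eq hb, ediv_pos_small hb (by omega) (by omega)]; ring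
  have hnegone : negaStep (b:ℤ) (-1) = 1 := by
    rw [negaStep_eq hb, ediv_neg_small hb (by omega) (by omega)]; ring
  intro k
  induction k with
  | zero =>
    intro m hm
    have hl : -1 ≤ m := by omega
    have hr : m ≤ 1 := by omega
    show negaStep _ (negaStep _ m) = 0
    interval_cases m
    · rw [hnegone, hone]
    · rw [negaStep_zero, negaStep_zero]
    · rw [hone, negaStep_zero]
  | succ k ih =>
    intro m hm
    rw [Function.iterate_succ_apply]
    apply ih
    rcases le_or_gt m.natAbs 1 with h | h
    · have hl : -1 ≤ m := by omega
      have hr : m ≤ 1 := by omega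
      interval_cases m
      · rw [hnegone]; simp
      · rw [negaStep_zero]; simp
      · rw [hone]; simp
    · have h2 := natAbs_ediv_lt hb (m := m) (by omega)
      rw [negaStep_eq hb, Int.natAbs_neg]
      omega

lemma iter_zero' {b : ℕ} (hb : 2 ≤ b) (m : ℤ) {i : ℕ} (hi : m.natAbs + 2 ≤ i) :
    (negaStep (b:ℤ))^[i] m = 0 := by
  obtain ⟨k, rfl⟩ : ∃ k, i = (m.natAbs + 2) + k := ⟨i - (m.natAbs + 2), by omega⟩
  rw [add_comm, Function.iterate_add_apply, iter_zero hb m.natAbs m (by omega)]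
  exact Function.iterate_fixed (negaStep_zero _) k

lemma step_pair {b : ℕ} (hb : 2 ≤ b) {α β : ℤ} (h : α + β = 0 ∨ α + β = 1) :
    negaStep (b:ℤ) α + negaStep (b:ℤ) β = 0 ∨ negaStep (b:ℤ) α + negaStep (b:ℤ) β = 1 := by
  have hB : (2:ℤ) ≤ (b:ℤ) := by exact_mod_cast hb
  rw [negaStep_eq hb, negaStep_eq hb]
  set s : ℤ := α + β with hs
  have H := Int.mul_ediv_add_emod α (b:ℤ)
  have hr0 : 0 ≤ α % (b:ℤ) := Int.emod_nonneg α (by omega)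
  have hr1 : α % (b:ℤ) < b := Int.emod_lt_of_pos α (by omega)
  set q := α / (b:ℤ) with hq
  set r := α % (b:ℤ) with hr
  have hβ : β = (s - r) + (b:ℤ) * (-q) := by linear_combination H - hs
  have hβd : β / (b:ℤ) = (s - r) / (b:ℤ) + (-q) := by
    rw [hβ]; exact Int.add_mul_ediv_left _ _ (by omega)
  rcases le_or_gt r s with hc | hc
  · have : (s - r) / (b:ℤ) = 0 := ediv_pos_small hb (by omega) (by omega)
    left; rw [hβd, this]; ring
  · have : (s - r) / (b:ℤ) = -1 := ediv_neg_small hb (by omega) (by omega)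
    right; rw [hβd, this]; ring

lemma coeff_eq {b : ℕ} (hb : 2 ≤ b) {α β : ℤ} (h0 : 0 ≤ α + β) (h1 : α + β < b) :
    (α % (b:ℤ) + β % (b:ℤ)) % (b:ℤ) = α + β := by
  rw [← Int.add_emod, Int.emod_eq_of_lt h0 h1]

lemma exists_one {b : ℕ} (hb : 2 ≤ b) : ∀ k : ℕ, ∀ α : ℤ, α.natAbs ≤ k → α ≠ 0 →
    ∃ j, (negaStep (b:ℤ))^[j] α + (negaStep (b:ℤ))^[j] (-α) = 1 := by
  have hB : (2:ℤ) ≤ (b:ℤ) := by exact_mod_cast hb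
  intro k
  induction k with
  | zero => intro α h1 h2; omega
  | succ k ih =>
    intro α h1 h2
    by_cases hd : α % (b:ℤ) = 0
    · obtain ⟨q, hq⟩ := Int.dvd_of_emod_eq_zero hd
      have hq0 : q ≠ 0 := by rintro rfl; simp at hq; exact h2 hq
      have hstep : negaStep (b:ℤ) α = -q := by
        rw [negaStep_eq hb, hq, Int.mul_ediv_cancel_left _ (by omega)]
      have hstep' : negaStep (b:ℤ) (-α) = q := by
        rw [negaStep_eq hb, hq, show -((b:ℤ)*q) = (b:ℤ) * (-q) from by ring,
          Int.mul_ediv_cancel_left _ (by omega : (b:ℤ) ≠ 0)]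
        ring
      have habs : q.natAbs ≤ k := by
        have : α.natAbs = b * q.natAbs := by rw [hq, Int.natAbs_mul, Int.natAbs_natCast]
        nlinarith [Int.natAbs_pos.mpr hq0]
      obtain ⟨j, hj⟩ := ih (-q) (by simpa using habs) (by simpa using hq0)
      refine ⟨j + 1, ?_⟩
      rw [Function.iterate_succ_apply, Function.iterate_succ_apply, hstep, hstep']
      simpa using hj
    · refine ⟨1, ?_⟩
      simp only [Function.iterate_one]
      rw [negaStep_eq hb, negaStep_eq hb]
      have H := Int.mul_ediv_add_emod α (b:ℤ)
      have hr0 : 0 ≤ α % (b:ℤ) := Int.emod_nonneg α (by omega)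
      have hr1 : α % (b:ℤ) < b := Int.emod_lt_of_pos α (by omega)
      set q := α / (b:ℤ)
      set r := α % (b:ℤ)
      have hna : -α = ((b:ℤ) - r) + (b:ℤ) * (-q - 1) := by linear_combination H
      have hd2 : (-α) / (b:ℤ) = ((b:ℤ) - r) / (b:ℤ) + (-q - 1) := by
        rw [hna]; exact Int.add_mul_ediv_left _ _ (by omega)
      have : ((b:ℤ) - r) / (b:ℤ) = 0 := ediv_pos_small hb (by omega) (by omega)
      rw [hd2, this]; ring

lemma digit_le_one {b : ℕ} (hb : 2 ≤ b) :
    ∀ N : ℕ, ∀ ε : ℕ → ℕ, (∀ i, ε i ≤ 1) →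
    ∀ j, bDigit b (∑ i ∈ Finset.range N, ε i * b ^ i) j ≤ 1 := by
  intro N
  induction N with
  | zero => intro ε hε j; simp [bDigit]
  | succ N ih =>
    intro ε hε j
    rw [Finset.sum_range_succ']
    have hre : ∑ i ∈ Finset.range N, ε (i + 1) * b ^ (i + 1)
        = b * ∑ i ∈ Finset.range N, ε (i + 1) * b ^ i := by
      rw [Finset.mul_sum]; apply Finset.sum_congr rfl; intros; ring
    rw [hre, pow_zero, mul_one]
    set S := ∑ i ∈ Finset.range N, ε (i + 1) * b ^ i with hS
    by_cases h0 : b * S + ε 0 = 0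
    · rw [h0]; simp [bDigit]
    · have hdig : Nat.digits b (b * S + ε 0) = ε 0 :: Nat.digits b S := by
        rw [Nat.digits_def' (by omega : 1 < b) (by omega)]
        have h1 : (b * S + ε 0) % b = ε 0 := by
          rw [Nat.mul_add_mod, Nat.mod_eq_of_lt (by have := hε 0; omega)]
        have h2 : (b * S + ε 0) / b = S := by
          rw [Nat.mul_add_div (by omega), Nat.div_eq_of_lt (by have := hε 0; omega),
            add_zero]
        rw [h1, h2]
      cases j with
      | zero =>
        show (Nat.digits b (b * S + ε 0)).getD 0 0 ≤ 1
        rw [hdig]; simpa using hε 0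
      | succ j =>
        show (Nat.digits b (b * S + ε 0)).getD (j + 1) 0 ≤ 1
        rw [hdig, List.getD_cons_succ]
        exact ih (fun i => ε (i + 1)) (fun i => hε (i + 1)) j

theorem stmt12 (b : ℕ) (hb : 2 ≤ b) (n : ℕ) :
    (∀ i, bDigit b (oplusNeg (b : ℤ) (n : ℤ) (-(n : ℤ))).toNat i ≤ 1) ∧
    (oplusNeg (b : ℤ) (n : ℤ) (-(n : ℤ)) = 0 ↔ n = 0) := by
  have hB : (2:ℤ) ≤ (b:ℤ) := by exact_mod_cast hb
  set t : ℕ → ℤ := fun i =>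
    (negaStep (b:ℤ))^[i] (n:ℤ) + (negaStep (b:ℤ))^[i] (-(n:ℤ)) with ht
  have ht01 : ∀ i, t i = 0 ∨ t i = 1 := by
    intro i
    induction i with
    | zero => left; simp [ht]
    | succ i ih =>
      have := step_pair hb (α := (negaStep (b:ℤ))^[i] (n:ℤ))
        (β := (negaStep (b:ℤ))^[i] (-(n:ℤ))) ih
      simpa [ht, Function.iterate_succ_apply'] using this
  have htN : ∀ i, n + 2 ≤ i → t i = 0 := by
    intro i hi
    have h1 : (negaStep (b:ℤ))^[i] (n:ℤ) = 0 :=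
      iter_zero' hb _ (by simp; omega)
    have h2 : (negaStep (b:ℤ))^[i] (-(n:ℤ)) = 0 :=
      iter_zero' hb _ (by rw [Int.natAbs_neg]; simp; omega)
    simp [ht, h1, h2]
  have hcoeff : ∀ i : ℕ,
      ((negaDigit (b:ℤ) (n:ℤ) i + negaDigit (b:ℤ) (-(n:ℤ)) i) % (b:ℤ)) * (b:ℤ) ^ i
        = t i * (b:ℤ) ^ i := by
    intro i
    congr 1
    have h01 := ht01 i
    show ((negaStep (b:ℤ))^[i] (n:ℤ) % (b:ℤ) + (negaStep (b:ℤ))^[i] (-(n:ℤ)) % (b:ℤ)) % (b:ℤ)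
      = t i
    exact coeff_eq hb (by rcases h01 with h | h <;> simp [ht] at h <;> omega)
      (by rcases h01 with h | h <;> simp [ht] at h <;> omega)
  have hsupp : oplusNeg (b:ℤ) (n:ℤ) (-(n:ℤ))
      = ∑ i ∈ Finset.range (n + 2), t i * (b:ℤ) ^ i := by
    unfold oplusNeg
    rw [finsum_congr hcoeff]
    apply finsum_eq_finset_sum_of_support_subset
    intro i hi
    simp only [Function.mem_support] at hi
    simp only [Finset.coe_range, Set.mem_Iio]
    by_contra hge
    rw [htN i (by omega), zero_mul] at hi
    exact hi rfl
  have hnonneg : ∀ i ∈ Finset.range (n + 2), (0:ℤ) ≤ t i * (b:ℤ) ^ i := by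
    intro i _
    rcases ht01 i with h | h <;> rw [h] <;> positivity
  constructor
  · -- digits ≤ 1
    have hcast : oplusNeg (b:ℤ) (n:ℤ) (-(n:ℤ))
        = ((∑ i ∈ Finset.range (n + 2), (t i).toNat * b ^ i : ℕ) : ℤ) := by
      rw [hsupp]
      push_cast
      apply Finset.sum_congr rfl
      intro i _
      congr 1
      rcases ht01 i with h | h <;> rw [h] <;> simp
    intro i
    rw [hcast, Int.toNat_natCast]
    exact digit_le_one hb _ (fun i => (t i).toNat)
      (fun i => by rcases ht01 i with h | h <;> simp [h]) i
  · constructor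
    · intro h
      by_contra hn
      have hn' : (n:ℤ) ≠ 0 := by exact_mod_cast hn
      obtain ⟨j, hj⟩ := exists_one hb (n:ℤ).natAbs (n:ℤ) le_rfl hn'
      have htj : t j = 1 := by simpa [ht] using hj
      have hjlt : j < n + 2 := by
        by_contra hge
        rw [htN j (by omega)] at htj
        exact absurd htj (by norm_num)
      have hle : t j * (b:ℤ) ^ j ≤ ∑ i ∈ Finset.range (n + 2), t i * (b:ℤ) ^ i :=
        Finset.single_le_sum hnonneg (Finset.mem_range.mpr hjlt)
      rw [hsupp] at h
      rw [htj, one_mul] at hle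
      have hpos : (0:ℤ) < (b:ℤ) ^ j := by positivity
      omega
    · rintro rfl
      rw [hsupp]
      apply Finset.sum_eq_zero
      intro i _
      have h0 : t i = 0 := by
        simp [ht, Function.iterate_fixed (negaStep_zero (b:ℤ))]
      rw [h0, zero_mul]
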